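/- Each of the vector fields X_1, …, X_n on ℝ^n dual to the Maurer–Cartan coframe of 𝔤 is complete: for every i ∈ {1, …, n} and every x_0 ∈ ℝ^n there exists a curve γ : ℝ → ℝ^n, defined for all time, with γ(0) = x_0 and γ′(t) = X_i(γ(t)) for all t ∈ ℝ. -/

import Mathlib

open scoped BigOperators

noncomputable section

/-- The matrix exponential. -/
def matExp {k : ℕ} (A : Matrix (Fin k) (Fin k) ℝ) : Matrix (Fin k) (Fin k) ℝ :=
  NormedSpace.exp A

/-- Exterior derivative of a smooth 1-form, evaluated at `x` on vectors `u, v`. -/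
def extDeriv' {E : Type*} [NormedAddCommGroup E] [NormedSpace ℝ E]
    (ω : E → E →L[ℝ] ℝ) (x u v : E) : ℝ :=
  fderiv ℝ ω x u v - fderiv ℝ ω x v u

/-- Wedge product of two 1-forms, evaluated at `x` on vectors `u, v`. -/
def wedge {E : Type*} [NormedAddCommGroup E] [NormedSpace ℝ E]
    (α β : E → E →L[ℝ] ℝ) (x u v : E) : ℝ :=
  α x u * β x v - α x v * β x u

/-- The 1-forms `ω i` satisfy the structure equations with structure constants `C`:
`dωⁱ + (1/2) Σ_{j,k} Cⁱ_{jk} ωʲ ∧ ωᵏ = 0`. -/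
def StructEq {E : Type*} [NormedAddCommGroup E] [NormedSpace ℝ E] {n : ℕ}
    (C : Fin n → Fin n → Fin n → ℝ) (ω : Fin n → E → E →L[ℝ] ℝ) : Prop :=
  ∀ i x u v, extDeriv' (ω i) x u v
    + (1 / 2) * ∑ j, ∑ k, C i j k * wedge (ω j) (ω k) x u v = 0

/-- The matrix of `ad(e_i)` in the basis `e`: its `(a,b)` entry is `C a i b`, where
`⁅e_j, e_k⁆ = Σ_i C i j k • e_i`. -/
def adMat {n : ℕ} (C : Fin n → Fin n → Fin n → ℝ) (i : Fin n) :
    Matrix (Fin n) (Fin n) ℝ := fun a b => C a i b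

/-- The `(n-s) × (n-s)` matrix, in the basis `(e_1, …, e_{n-s})` of the ideal `𝔨_s`,
of the restriction of `ad(e_{n-s})` to `𝔨_s`. -/
def adRes {n : ℕ} (C : Fin n → Fin n → Fin n → ℝ) (s : ℕ) (hs : s < n) :
    Matrix (Fin (n - s)) (Fin (n - s)) ℝ :=
  fun a b => C (Fin.castLE (Nat.sub_le n s) a) ⟨n - s - 1, by omega⟩
    (Fin.castLE (Nat.sub_le n s) b)

/-- The block-diagonal matrix `D_s(t)` with upper-left block `exp(t·[ad_s(e_{n-s})])`
and lower-right block the `s × s` identity. -/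
def Dmat {n : ℕ} (C : Fin n → Fin n → Fin n → ℝ) (s : ℕ) (hs : s < n) (t : ℝ) :
    Matrix (Fin n) (Fin n) ℝ :=
  Matrix.reindex (finSumFinEquiv.trans (finCongr (Nat.sub_add_cancel hs.le)))
    (finSumFinEquiv.trans (finCongr (Nat.sub_add_cancel hs.le)))
    (Matrix.fromBlocks (matExp (t • adRes C s hs)) 0 0 (1 : Matrix (Fin s) (Fin s) ℝ))

/-- `M(x) = D_0(−x_n) · D_1(−x_{n−1}) ⋯ D_{n−2}(−x_2)`. -/
def Mmat {n : ℕ} (hn : 2 ≤ n) (C : Fin n → Fin n → Fin n → ℝ)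
    (x : Fin n → ℝ) : Matrix (Fin n) (Fin n) ℝ :=
  (List.ofFn (fun k : Fin (n - 1) =>
    Dmat C k.val (by have := k.isLt; omega)
      (- x ⟨n - 1 - k.val, by have := k.isLt; omega⟩))).prod

/-- The Maurer–Cartan coframe of `𝔤` on `ℝⁿ`: `τⁱ(x)(v) = Σ_j M(x)ⁱ_j v_j`. -/
def tau {n : ℕ} (hn : 2 ≤ n) (C : Fin n → Fin n → Fin n → ℝ) (i : Fin n) :
    (Fin n → ℝ) → (Fin n → ℝ) →L[ℝ] ℝ :=
  fun x => ∑ j, Mmat hn C x i j • (ContinuousLinearMap.proj j : (Fin n → ℝ) →L[ℝ] ℝ)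

/-- The frame of vector fields dual to the Maurer–Cartan coframe:
the `j`-th component of `X_i(x)` is `(M(x)⁻¹)_{j i}`. -/
def Xvf {n : ℕ} (hn : 2 ≤ n) (C : Fin n → Fin n → Fin n → ℝ) (i : Fin n) :
    (Fin n → ℝ) → (Fin n → ℝ) :=
  fun x j => (Mmat hn C x)⁻¹ j i

end
noncomputable section
namespace S6

open Matrix

lemma matExp_row {k : ℕ} (A : Matrix (Fin k) (Fin k) ℝ) (j : Fin k)
    (hA : ∀ b, A j b = 0) (b : Fin k) :
    matExp A j b = (1 : Matrix (Fin k) (Fin k) ℝ) j b := by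
  letI : SeminormedRing (Matrix (Fin k) (Fin k) ℝ) := Matrix.linftyOpSemiNormedRing
  letI : NormedRing (Matrix (Fin k) (Fin k) ℝ) := Matrix.linftyOpNormedRing
  letI : NormedAlgebra ℝ (Matrix (Fin k) (Fin k) ℝ) := Matrix.linftyOpNormedAlgebra
  have hpow : ∀ m : ℕ, m ≠ 0 → (A ^ m) j b = 0 := by
    intro m hm
    obtain ⟨m, rfl⟩ := Nat.exists_eq_succ_of_ne_zero hm
    rw [pow_succ', Matrix.mul_apply]
    simp [hA]
  have hs : HasSum (fun m : ℕ => (m.factorial⁻¹ : ℝ) • A ^ m) (NormedSpace.exp A) :=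
    NormedSpace.exp_series_hasSum_exp' A
  have hE : Continuous fun M : Matrix (Fin k) (Fin k) ℝ => M j b :=
    (continuous_apply b).comp (continuous_apply j)
  have h2 : HasSum (fun m : ℕ => ((m.factorial⁻¹ : ℝ) • A ^ m) j b)
      ((NormedSpace.exp A) j b) :=
    hs.map (AddMonoidHom.mk' (fun M : Matrix (Fin k) (Fin k) ℝ => M j b)
      (fun _ _ => rfl)) hE
  have h3 : HasSum (fun m : ℕ => ((m.factorial⁻¹ : ℝ) • A ^ m) j b)
      ((1 : Matrix (Fin k) (Fin k) ℝ) j b) := by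
    have := hasSum_single (f := fun m : ℕ => ((m.factorial⁻¹ : ℝ) • A ^ m) j b) 0
      (by intro m hm; simp [Matrix.smul_apply, hpow m hm])
    simpa using this
  exact h2.unique h3

lemma Dmat_mul_Dmat {n : ℕ} (C : Fin n → Fin n → Fin n → ℝ) (s : ℕ) (hs : s < n) (t u : ℝ) :
    Dmat C s hs t * Dmat C s hs u = Dmat C s hs (t + u) := by
  unfold Dmat
  rw [Matrix.reindex_apply, Matrix.reindex_apply, Matrix.reindex_apply,
    Matrix.submatrix_mul_equiv, Matrix.fromBlocks_multiply]
  have hexp : matExp (t • adRes C s hs) * matExp (u • adRes C s hs)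
      = matExp ((t + u) • adRes C s hs) := by
    unfold matExp
    rw [← Matrix.exp_add_of_commute _ _
      (((Commute.refl (adRes C s hs)).smul_left t).smul_right u), add_smul]
  simp [hexp]

lemma Dmat_zero {n : ℕ} (C : Fin n → Fin n → Fin n → ℝ) (s : ℕ) (hs : s < n) :
    Dmat C s hs 0 = 1 := by
  unfold Dmat matExp
  rw [zero_smul, NormedSpace.exp_zero, Matrix.fromBlocks_one, Matrix.reindex_apply,
    Matrix.submatrix_one_equiv]

lemma prod_mul_reverse_prod {M : Type*} [Monoid M] :
    ∀ {l r : List M}, List.Forall₂ (fun a b => a * b = 1) l r →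
      l.prod * r.reverse.prod = 1 := by
  intro l r h
  induction h with
  | nil => simp
  | @cons a b l' r' hab _ ih =>
    rw [List.prod_cons, List.reverse_cons, List.prod_append, List.prod_singleton,
      mul_assoc, ← mul_assoc l'.prod, ih, one_mul, hab]

/-- The list whose product is `M(x)⁻¹`. -/
def NL {n : ℕ} (C : Fin n → Fin n → Fin n → ℝ) (x : Fin n → ℝ) :
    List (Matrix (Fin n) (Fin n) ℝ) :=
  (List.ofFn (fun k : Fin (n - 1) =>
    Dmat C k.val (by have := k.isLt; omega)
      (x ⟨n - 1 - k.val, by have := k.isLt; omega⟩))).reverse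

def Nmat {n : ℕ} (C : Fin n → Fin n → Fin n → ℝ) (x : Fin n → ℝ) :
    Matrix (Fin n) (Fin n) ℝ := (NL C x).prod

lemma Mmat_mul_Nmat {n : ℕ} (hn : 2 ≤ n) (C : Fin n → Fin n → Fin n → ℝ) (x : Fin n → ℝ) :
    Mmat hn C x * Nmat C x = 1 := by
  apply prod_mul_reverse_prod
  rw [List.forall₂_iff_get]
  constructor
  · simp
  · intro m h1 h2
    simp only [List.get_eq_getElem, List.getElem_ofFn]
    rw [Dmat_mul_Dmat, neg_add_cancel, Dmat_zero]

lemma Xvf_eq {n : ℕ} (hn : 2 ≤ n) (C : Fin n → Fin n → Fin n → ℝ) (i : Fin n)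
    (x : Fin n → ℝ) (j : Fin n) : Xvf hn C i x j = Nmat C x j i := by
  unfold Xvf
  rw [Matrix.inv_eq_right_inv (Mmat_mul_Nmat hn C x)]
lemma Dmat_row {n : ℕ} {C : Fin n → Fin n → Fin n → ℝ}
    (hC0 : ∀ a b c : Fin n, (b : ℕ) ≤ (a : ℕ) → (c : ℕ) ≤ (b : ℕ) → C a b c = 0)
    (s : ℕ) (hs : s < n) (t : ℝ) (j : Fin n) (hj : n - 1 - s ≤ (j : ℕ)) (b : Fin n) :
    Dmat C s hs t j b = (1 : Matrix (Fin n) (Fin n) ℝ) j b := by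
  unfold Dmat
  rw [Matrix.reindex_apply, Matrix.submatrix_apply]
  set e := finSumFinEquiv.trans (finCongr (Nat.sub_add_cancel hs.le)) with he
  have he1 : ∀ a : Fin (n - s), e (Sum.inl a) = ⟨a.val, by omega⟩ := by
    intro a
    rw [he]
    apply Fin.ext
    simp [finSumFinEquiv_apply_left]
  have he2 : ∀ a : Fin s, e (Sum.inr a) = ⟨(n - s) + a.val, by omega⟩ := by
    intro a
    rw [he]
    apply Fin.ext
    simp [finSumFinEquiv_apply_right]
  by_cases hjlt : (j : ℕ) < n - s
  · have hesj : e.symm j = Sum.inl ⟨j, hjlt⟩ := by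
      rw [Equiv.symm_apply_eq, he1]
    by_cases hblt : (b : ℕ) < n - s
    · have hesb : e.symm b = Sum.inl ⟨b, hblt⟩ := by
        rw [Equiv.symm_apply_eq, he1]
      rw [hesj, hesb, Matrix.fromBlocks_apply₁₁]
      have hrow : ∀ bb, (t • adRes C s hs) ⟨(j : ℕ), hjlt⟩ bb = 0 := by
        intro bb
        rw [Matrix.smul_apply]
        unfold adRes
        rw [hC0]
        · exact smul_zero t
        · simp only [Fin.coe_castLE]
          omega
        · simp only [Fin.coe_castLE]
          omega
      rw [matExp_row _ _ hrow]
      simp only [Matrix.one_apply, Fin.ext_iff]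
    · have hesb : e.symm b = Sum.inr ⟨(b : ℕ) - (n - s), by omega⟩ := by
        rw [Equiv.symm_apply_eq, he2]
        apply Fin.ext
        simp
        omega
      rw [hesj, hesb, Matrix.fromBlocks_apply₁₂]
      have : j ≠ b := by
        intro hh
        rw [hh] at hjlt
        omega
      simp [Matrix.one_apply, this]
  · have hesj : e.symm j = Sum.inr ⟨(j : ℕ) - (n - s), by omega⟩ := by
      rw [Equiv.symm_apply_eq, he2]
      apply Fin.ext
      simp
      omega
    by_cases hblt : (b : ℕ) < n - s
    · have hesb : e.symm b = Sum.inl ⟨b, hblt⟩ := by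
        rw [Equiv.symm_apply_eq, he1]
      rw [hesj, hesb, Matrix.fromBlocks_apply₂₁]
      have : j ≠ b := by
        intro hh
        rw [hh] at hjlt
        omega
      simp [Matrix.one_apply, this]
    · have hesb : e.symm b = Sum.inr ⟨(b : ℕ) - (n - s), by omega⟩ := by
        rw [Equiv.symm_apply_eq, he2]
        apply Fin.ext
        simp
        omega
      rw [hesj, hesb, Matrix.fromBlocks_apply₂₂]
      simp only [Matrix.one_apply, Fin.ext_iff]
      have : ((j : ℕ) - (n - s) = (b : ℕ) - (n - s)) ↔ ((j : ℕ) = (b : ℕ)) := by omega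
      simp [this]
lemma prod_row_absorb {n : ℕ} (j : Fin n) :
    ∀ (l : List (Matrix (Fin n) (Fin n) ℝ)),
    (∀ A ∈ l, ∀ b, A j b = (1 : Matrix (Fin n) (Fin n) ℝ) j b) →
    ∀ (P : Matrix (Fin n) (Fin n) ℝ) (b : Fin n), (l.prod * P) j b = P j b := by
  intro l
  induction l with
  | nil => simp
  | cons A l ih =>
    intro h P b
    rw [List.prod_cons, mul_assoc]
    have step : (A * (l.prod * P)) j b = (1 * (l.prod * P) : Matrix (Fin n) (Fin n) ℝ) j b := by
      rw [Matrix.mul_apply, Matrix.mul_apply]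
      exact Finset.sum_congr rfl fun c _ => by rw [h A (List.mem_cons_self) c]
    rw [step, one_mul]
    exact ih (fun A' hA' => h A' (List.mem_cons_of_mem A hA')) P b

lemma Dmat_congr {n : ℕ} (C : Fin n → Fin n → Fin n → ℝ) {s s' : ℕ} (h : s = s')
    (hs : s < n) {t t' : ℝ} (ht : t = t') : Dmat C s hs t = Dmat C s' (h ▸ hs) t' := by
  subst h; subst ht; rfl

lemma NL_length {n : ℕ} (C : Fin n → Fin n → Fin n → ℝ) (x : Fin n → ℝ) :
    (NL C x).length = n - 1 := by simp [NL]

lemma NL_getElem {n : ℕ} (C : Fin n → Fin n → Fin n → ℝ) (x : Fin n → ℝ)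
    (m : ℕ) (hm : m < n - 1) :
    (NL C x)[m]'(by simpa [NL] using hm)
      = Dmat C (n - 2 - m) (by omega) (x ⟨m + 1, by omega⟩) := by
  unfold NL
  rw [List.getElem_reverse, List.getElem_ofFn]
  have h1 : (↑(⟨(List.ofFn (fun k : Fin (n - 1) =>
      Dmat C k.val (by have := k.isLt; omega)
        (x ⟨n - 1 - k.val, by have := k.isLt; omega⟩))).length - 1 - m,
      by simp; omega⟩ : Fin (n - 1)) : ℕ) = n - 2 - m := by simp; omega
  apply Dmat_congr C h1
  apply congrArg x
  apply Fin.ext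
  simp
  omega
lemma Nmat_drop {n : ℕ} {C : Fin n → Fin n → Fin n → ℝ}
    (hC0 : ∀ a b c : Fin n, (b : ℕ) ≤ (a : ℕ) → (c : ℕ) ≤ (b : ℕ) → C a b c = 0)
    (x : Fin n → ℝ) (j : Fin n) (b : Fin n) :
    Nmat C x j b = (((NL C x).drop j.val).prod) j b := by
  have h1 : Nmat C x j b
      = ((((NL C x).take j.val).prod) * (((NL C x).drop j.val).prod)) j b := by
    rw [List.prod_take_mul_prod_drop]; rfl
  rw [h1]
  apply prod_row_absorb
  intro A hA bb
  obtain ⟨m, hmlt, hget⟩ := List.mem_iff_getElem.mp hA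
  have hm1 : m < j.val := by
    have := hmlt
    rw [List.length_take] at this
    omega
  have hm2 : m < n - 1 := by
    have h := hmlt
    rw [List.length_take, NL_length] at h
    omega
  rw [← hget, List.getElem_take]
  rw [NL_getElem C x m hm2]
  apply Dmat_row hC0
  omega

lemma Nmat_row {n : ℕ} {C : Fin n → Fin n → Fin n → ℝ}
    (hC0 : ∀ a b c : Fin n, (b : ℕ) ≤ (a : ℕ) → (c : ℕ) ≤ (b : ℕ) → C a b c = 0)
    (j : Fin n) (x y : Fin n → ℝ)
    (hxy : ∀ k : Fin n, (j : ℕ) < (k : ℕ) → x k = y k) (b : Fin n) :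
    Nmat C x j b = Nmat C y j b := by
  rw [Nmat_drop hC0, Nmat_drop hC0]
  have hdrop : (NL C x).drop j.val = (NL C y).drop j.val := by
    apply List.ext_getElem
    · rw [List.length_drop, List.length_drop, NL_length, NL_length]
    · intro m h1 h2
      rw [List.getElem_drop, List.getElem_drop]
      have hlt : j.val + m < n - 1 := by
        rw [List.length_drop, NL_length] at h1
        omega
      rw [NL_getElem C x _ hlt, NL_getElem C y _ hlt]
      apply congrArg
      exact hxy _ (by simp)
  rw [hdrop]
lemma cont_matExp_smul {k : ℕ} (A : Matrix (Fin k) (Fin k) ℝ) :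
    Continuous fun t : ℝ => matExp (t • A) := by
  letI : SeminormedRing (Matrix (Fin k) (Fin k) ℝ) := Matrix.linftyOpSemiNormedRing
  letI : NormedRing (Matrix (Fin k) (Fin k) ℝ) := Matrix.linftyOpNormedRing
  letI : NormedAlgebra ℝ (Matrix (Fin k) (Fin k) ℝ) := Matrix.linftyOpNormedAlgebra
  exact (show Continuous (NormedSpace.exp : Matrix (Fin k) (Fin k) ℝ → _) from continuous_iff_continuousAt.2 fun x => (NormedSpace.exp_analytic (𝕂 := ℝ) x).continuousAt).comp (continuous_id.smul continuous_const)

lemma cont_Dmat {n : ℕ} (C : Fin n → Fin n → Fin n → ℝ) (s : ℕ) (hs : s < n) (c : Fin n) :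
    Continuous fun x : Fin n → ℝ => Dmat C s hs (x c) := by
  simp only [Dmat, Matrix.reindex_apply]
  apply Continuous.matrix_submatrix
  apply Continuous.matrix_fromBlocks
  · exact (cont_matExp_smul (adRes C s hs)).comp (continuous_apply c)
  · exact continuous_const
  · exact continuous_const
  · exact continuous_const

lemma cont_list_prod {n : ℕ} :
    ∀ (l : List ((Fin n → ℝ) → Matrix (Fin n) (Fin n) ℝ)),
    (∀ f ∈ l, Continuous f) →
    Continuous fun x : Fin n → ℝ => (l.map (fun f => f x)).prod := by
  intro l
  induction l with
  | nil => simpa using continuous_const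
  | cons f l ih =>
    intro h
    simp only [List.map_cons, List.prod_cons]
    exact (h f (List.mem_cons_self)).matrix_mul
      (ih fun g hg => h g (List.mem_cons_of_mem f hg))

lemma cont_Nmat {n : ℕ} (C : Fin n → Fin n → Fin n → ℝ) :
    Continuous fun x : Fin n → ℝ => Nmat C x := by
  have key : ∀ x : Fin n → ℝ, Nmat C x
      = (((List.ofFn (fun k : Fin (n - 1) => fun x : Fin n → ℝ =>
          Dmat C k.val (by have := k.isLt; omega)
            (x ⟨n - 1 - k.val, by have := k.isLt; omega⟩))).reverse).map
          (fun f => f x)).prod := by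
    intro x
    rw [List.map_reverse, List.map_ofFn]
    rfl
  simp only [key]
  apply cont_list_prod
  intro f hf
  rw [List.mem_reverse, List.mem_ofFn] at hf
  obtain ⟨k, rfl⟩ := hf
  exact cont_Dmat C k.val _ _

lemma cont_Xvf {n : ℕ} (hn : 2 ≤ n) (C : Fin n → Fin n → Fin n → ℝ) (i : Fin n) :
    Continuous (Xvf hn C i) := by
  have : Xvf hn C i = fun x j => Nmat C x j i := by
    funext x j
    exact Xvf_eq hn C i x j
  rw [this]
  exact continuous_pi fun j => (cont_Nmat C).matrix_elem j i
lemma structConst_vanish {n : ℕ}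
    (L : Type) [LieRing L] [LieAlgebra ℝ L] (B : Module.Basis (Fin n) ℝ L)
    (C : Fin n → Fin n → Fin n → ℝ)
    (hC : ∀ j k, ⁅B j, B k⁆ = ∑ i, C i j k • B i)
    (hchain : ∀ p : ℕ, p < n → ∀ x y : L,
      x ∈ Submodule.span ℝ (⇑B '' {i : Fin n | (i : ℕ) < p + 1}) →
      y ∈ Submodule.span ℝ (⇑B '' {i : Fin n | (i : ℕ) < p}) →
      ⁅x, y⁆ ∈ Submodule.span ℝ (⇑B '' {i : Fin n | (i : ℕ) < p})) :
    ∀ a b c : Fin n, (b : ℕ) ≤ (a : ℕ) → (c : ℕ) ≤ (b : ℕ) → C a b c = 0 := by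
  intro a b c hba hcb
  rcases eq_or_lt_of_le hcb with heq | hlt
  · have hcb' : c = b := Fin.ext heq
    subst hcb'
    have h0 : ∑ i, C i c c • B i = 0 := by rw [← hC]; exact lie_self _
    exact Fintype.linearIndependent_iff.mp B.linearIndependent _ h0 a
  · have hmem : ⁅B b, B c⁆ ∈ Submodule.span ℝ (⇑B '' {i : Fin n | (i : ℕ) < (b : ℕ)}) := by
      apply hchain (b : ℕ) b.isLt
      · exact Submodule.subset_span ⟨b, by simp, rfl⟩
      · exact Submodule.subset_span ⟨c, hlt, rfl⟩
    rw [hC, Module.Basis.mem_span_image] at hmem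
    by_contra hne
    have hsupp : a ∈ (B.repr (∑ i, C i b c • B i)).support := by
      rw [Finsupp.mem_support_iff, Module.Basis.repr_sum_self]
      exact hne
    have := hmem hsupp
    simp only [Set.mem_setOf_eq] at this
    omega
/-- Picard iteration for the ODE. -/
def picard {n : ℕ} (F : (Fin n → ℝ) → (Fin n → ℝ)) (x₀ : Fin n → ℝ) :
    ℕ → ℝ → Fin n → ℝ
  | 0 => fun _ => x₀
  | (m + 1) => fun t j => x₀ j + ∫ s in (0:ℝ)..t, F (picard F x₀ m s) j

lemma picard_succ_apply {n : ℕ} (F : (Fin n → ℝ) → (Fin n → ℝ)) (x₀ : Fin n → ℝ)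
    (m : ℕ) (t : ℝ) (j : Fin n) :
    picard F x₀ (m + 1) t j = x₀ j + ∫ s in (0:ℝ)..t, F (picard F x₀ m s) j := rfl

lemma picard_cont {n : ℕ} {F : (Fin n → ℝ) → (Fin n → ℝ)} (hFc : Continuous F)
    (x₀ : Fin n → ℝ) (m : ℕ) : Continuous (picard F x₀ m) := by
  induction m with
  | zero => exact continuous_const
  | succ m ih =>
    have : picard F x₀ (m + 1)
        = fun t j => x₀ j + ∫ s in (0:ℝ)..t, F (picard F x₀ m s) j := rfl
    rw [this]
    apply continuous_pi
    intro j
    apply Continuous.add continuous_const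
    apply intervalIntegral.continuous_primitive
    intro a b'
    exact ((continuous_apply j).comp (hFc.comp ih)).intervalIntegrable a b'

lemma picard_agree {n : ℕ} {F : (Fin n → ℝ) → (Fin n → ℝ)} (x₀ : Fin n → ℝ)
    (hFd : ∀ (j : Fin n) (x y : Fin n → ℝ),
      (∀ k : Fin n, (j : ℕ) < (k : ℕ) → x k = y k) → F x j = F y j) :
    ∀ (m : ℕ) (t : ℝ) (j : Fin n), n - 1 - m ≤ (j : ℕ) →
      picard F x₀ (m + 1) t j = picard F x₀ (m + 2) t j := by
  intro m
  induction m with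
  | zero =>
    intro t j hj
    rw [picard_succ_apply, picard_succ_apply]
    congr 1
    apply intervalIntegral.integral_congr
    intro s _
    exact hFd j _ _ (fun k hk => absurd k.isLt (by omega))
  | succ m ih =>
    intro t j hj
    rw [picard_succ_apply, picard_succ_apply]
    congr 1
    apply intervalIntegral.integral_congr
    intro s _
    exact hFd j _ _ (fun k hk => ih s k (by omega))

lemma picard_sol {n : ℕ} {F : (Fin n → ℝ) → (Fin n → ℝ)} (hn : 2 ≤ n)
    (hFc : Continuous F) (x₀ : Fin n → ℝ)
    (hFd : ∀ (j : Fin n) (x y : Fin n → ℝ),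
      (∀ k : Fin n, (j : ℕ) < (k : ℕ) → x k = y k) → F x j = F y j) :
    picard F x₀ n 0 = x₀ ∧
      ∀ t : ℝ, HasDerivAt (picard F x₀ n) (F (picard F x₀ n t)) t := by
  obtain ⟨N2, rfl⟩ : ∃ m, n = m + 2 := ⟨n - 2, by omega⟩
  constructor
  · funext j
    rw [picard_succ_apply F x₀ (N2 + 1), intervalIntegral.integral_same, add_zero]
  · intro t
    rw [hasDerivAt_pi]
    intro j
    have hint : Continuous fun s => F (picard F x₀ (N2 + 1) s) j :=
      (continuous_apply j).comp (hFc.comp (picard_cont hFc x₀ (N2 + 1)))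
    have hcomp : (fun u => picard F x₀ (N2 + 2) u j)
        = fun u => x₀ j + ∫ s in (0:ℝ)..u, F (picard F x₀ (N2 + 1) s) j := by
      funext u
      rw [picard_succ_apply F x₀ (N2 + 1)]
    have hval : F (picard F x₀ (N2 + 1) t) j = F (picard F x₀ (N2 + 2) t) j :=
      hFd j _ _ (fun k hk => picard_agree x₀ hFd N2 t k (by omega))
    rw [hcomp, ← hval]
    exact (hint.integral_hasStrictDerivAt 0 t).hasDerivAt.const_add (x₀ j)
end S6
end
/-- Completeness of the dual frame.
Each vector field `X_i` dual to the Maurer–Cartan coframe is complete: through every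
initial point there is an integral curve defined for all time. -/
theorem statement6
    (n : ℕ) (hn : 2 ≤ n)
    (L : Type) [LieRing L] [LieAlgebra ℝ L] (B : Module.Basis (Fin n) ℝ L)
    (C : Fin n → Fin n → Fin n → ℝ)
    (hC : ∀ j k, ⁅B j, B k⁆ = ∑ i, C i j k • B i)
    (hchain : ∀ p : ℕ, p < n → ∀ x y : L,
      x ∈ Submodule.span ℝ (⇑B '' {i : Fin n | (i : ℕ) < p + 1}) →
      y ∈ Submodule.span ℝ (⇑B '' {i : Fin n | (i : ℕ) < p}) →
      ⁅x, y⁆ ∈ Submodule.span ℝ (⇑B '' {i : Fin n | (i : ℕ) < p})) :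
    ∀ (i : Fin n) (x₀ : Fin n → ℝ),
      ∃ γ : ℝ → (Fin n → ℝ), γ 0 = x₀ ∧
        ∀ t : ℝ, HasDerivAt γ (Xvf hn C i (γ t)) t := by
  intro i x₀
  have hC0 := S6.structConst_vanish L B C hC hchain
  have hFc : Continuous (Xvf hn C i) := S6.cont_Xvf hn C i
  have hFd : ∀ (j : Fin n) (x y : Fin n → ℝ),
      (∀ k : Fin n, (j : ℕ) < (k : ℕ) → x k = y k) →
      Xvf hn C i x j = Xvf hn C i y j := by
    intro j x y hxy
    rw [S6.Xvf_eq, S6.Xvf_eq]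
    exact S6.Nmat_row hC0 j x y hxy i
  obtain ⟨h0, h1⟩ := S6.picard_sol hn hFc x₀ hFd
  exact ⟨S6.picard (Xvf hn C i) x₀ n, h0, h1⟩
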